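/- Let m ≥ 1 be an integer and q_m(μ) = (4+mμ)·r_m(μ) with r_m(μ) = 6 + ((19m−25)/4)μ + m(m−5)μ² + ((m³−10m²+15m+10)/16)μ³. For m ≥ 8, q_m(μ) > 0 for all μ > 0. For m = 1 and m = 2, q_m has exactly two positive roots μ_{m,1} < μ_{m,2}, and for μ > 0 one has q_m(μ) ≥ 0 if and only if μ ≤ μ_{m,1} or μ ≥ μ_{m,2}; moreover μ_{1,1} = √(3/2) and μ_{1,2} = 4. For 3 ≤ m ≤ 7, q_m has exactly one positive root μ_m, and for μ > 0 one has q_m(μ) ≥ 0 if and only if μ ≤ μ_m. -/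
import Mathlib


/-- `r_m(μ)` factor of `q_m(μ) = P_μ^m(1/2)` for type `I_{1,4}`. -/
noncomputable def rI14 (m : ℕ) (μ : ℝ) : ℝ :=
  6 + ((19 * (m : ℝ) - 25) / 4) * μ + (m : ℝ) * ((m : ℝ) - 5) * μ ^ 2 +
    (((m : ℝ) ^ 3 - 10 * (m : ℝ) ^ 2 + 15 * (m : ℝ) + 10) / 16) * μ ^ 3

/-- `q_m(μ) = P_μ^m(1/2) = (4+mμ)·r_m(μ)` for type `I_{1,4}`. -/
noncomputable def qI14 (m : ℕ) (μ : ℝ) : ℝ := (4 + (m : ℝ) * μ) * rI14 m μ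

private lemma rI14_cont (m : ℕ) : Continuous (rI14 m) := by unfold rI14; fun_prop

private lemma factor_pos (m : ℕ) {μ : ℝ} (hμ : 0 < μ) : 0 < 4 + (m : ℝ) * μ := by positivity

private lemma q_nonneg_iff (m : ℕ) {μ : ℝ} (hμ : 0 < μ) :
    0 ≤ qI14 m μ ↔ 0 ≤ rI14 m μ := by
  unfold qI14
  constructor
  · intro h
    by_contra h'
    push_neg at h'
    nlinarith [factor_pos m hμ]
  · intro h
    exact mul_nonneg (factor_pos m hμ).le h

private lemma q_eq_zero_iff (m : ℕ) {μ : ℝ} (hμ : 0 < μ) :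
    qI14 m μ = 0 ↔ rI14 m μ = 0 := by
  unfold qI14
  constructor
  · intro h
    rcases mul_eq_zero.1 h with h | h
    · exact absurd h (ne_of_gt (factor_pos m hμ))
    · exact h
  · intro h
    rw [h, mul_zero]

private lemma cross_unique {f : ℝ → ℝ} {k : ℕ}
    (h : ∀ x y : ℝ, 0 < x → x < y → f y * x ^ k < f x * y ^ k)
    {x y : ℝ} (hx : 0 < x) (hy : 0 < y) (hfx : f x = 0) (hfy : f y = 0) : x = y := by
  rcases lt_trichotomy x y with h' | h' | h'
  · have := h x y hx h'
    rw [hfx, hfy] at this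
    simp at this
  · exact h'
  · have := h y x hy h'
    rw [hfx, hfy] at this
    simp at this

private lemma cross_sign {f : ℝ → ℝ} {k : ℕ}
    (h : ∀ x y : ℝ, 0 < x → x < y → f y * x ^ k < f x * y ^ k)
    {ρ : ℝ} (hρ : 0 < ρ) (h0 : f ρ = 0) {μ : ℝ} (hμ : 0 < μ) :
    0 ≤ f μ ↔ μ ≤ ρ := by
  constructor
  · intro hf
    by_contra hc
    push_neg at hc
    have h1 := h ρ μ hρ hc
    rw [h0, zero_mul] at h1
    have h2 := mul_nonneg hf (pow_pos hρ k).le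
    linarith
  · intro hle
    rcases eq_or_lt_of_le hle with heq | hlt
    · rw [heq]; exact h0.ge
    · have h1 := h μ ρ hμ hlt
      rw [h0, zero_mul] at h1
      rcases mul_pos_iff.1 h1 with ⟨h2, _⟩ | ⟨_, h2⟩
      · exact h2.le
      · exact absurd (pow_pos hρ k) (by linarith)

private lemma cross37 (m : ℕ) (h3 : 3 ≤ m) (h7 : m ≤ 7) :
    ∃ k : ℕ, ∀ x y : ℝ, 0 < x → x < y → rI14 m y * x ^ k < rI14 m x * y ^ k := by
  interval_cases m
  · refine ⟨1, fun x y hx hxy => ?_⟩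
    have hy : 0 < y := hx.trans hxy
    unfold rI14; push_cast
    nlinarith [sub_pos.2 hxy, mul_pos (sub_pos.2 hxy) (mul_pos hx hy),
      mul_pos (mul_pos (sub_pos.2 hxy) (mul_pos hx hy)) (by linarith : (0:ℝ) < x + y)]
  · refine ⟨1, fun x y hx hxy => ?_⟩
    have hy : 0 < y := hx.trans hxy
    unfold rI14; push_cast
    nlinarith [sub_pos.2 hxy, mul_pos (sub_pos.2 hxy) (mul_pos hx hy),
      mul_pos (mul_pos (sub_pos.2 hxy) (mul_pos hx hy)) (by linarith : (0:ℝ) < x + y)]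
  · refine ⟨1, fun x y hx hxy => ?_⟩
    have hy : 0 < y := hx.trans hxy
    unfold rI14; push_cast
    nlinarith [sub_pos.2 hxy, mul_pos (sub_pos.2 hxy) (mul_pos hx hy),
      mul_pos (mul_pos (sub_pos.2 hxy) (mul_pos hx hy)) (by linarith : (0:ℝ) < x + y)]
  · refine ⟨2, fun x y hx hxy => ?_⟩
    have hy : 0 < y := hx.trans hxy
    unfold rI14; push_cast
    nlinarith [sub_pos.2 hxy, mul_pos (sub_pos.2 hxy) (mul_pos hx hy),
      mul_pos (mul_pos (sub_pos.2 hxy) (mul_pos hx hy)) (mul_pos hx hy),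
      mul_pos (sub_pos.2 hxy) (by linarith : (0:ℝ) < x + y)]
  · refine ⟨2, fun x y hx hxy => ?_⟩
    have hy : 0 < y := hx.trans hxy
    unfold rI14; push_cast
    nlinarith [sub_pos.2 hxy, mul_pos (sub_pos.2 hxy) (mul_pos hx hy),
      mul_pos (mul_pos (sub_pos.2 hxy) (mul_pos hx hy)) (mul_pos hx hy),
      mul_pos (sub_pos.2 hxy) (by linarith : (0:ℝ) < x + y)]

private lemma root37 (m : ℕ) (h3 : 3 ≤ m) (h7 : m ≤ 7) :
    ∃ ρ ∈ Set.Icc (1:ℝ) 10, rI14 m ρ = 0 := by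
  have h := intermediate_value_Icc' (by norm_num : (1:ℝ) ≤ 10) (rI14_cont m).continuousOn
  have h0 : (0:ℝ) ∈ Set.Icc (rI14 m 10) (rI14 m 1) := by
    interval_cases m <;> constructor <;> · unfold rI14; push_cast; norm_num
  obtain ⟨ρ, hρ, hρ0⟩ := h h0
  exact ⟨ρ, hρ, hρ0⟩

private lemma r1_sqrt : rI14 1 (Real.sqrt (3 / 2)) = 0 := by
  have hs : Real.sqrt (3 / 2) ^ 2 = 3 / 2 := Real.sq_sqrt (by norm_num)
  unfold rI14; push_cast
  linear_combination (Real.sqrt (3 / 2) - 4) * hs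

private lemma r1_four : rI14 1 4 = 0 := by unfold rI14; norm_num

private lemma sqrt_lt_four : Real.sqrt (3 / 2) < 4 := by
  have hs : Real.sqrt (3 / 2) ^ 2 = 3 / 2 := Real.sq_sqrt (by norm_num)
  nlinarith [hs, Real.sqrt_nonneg (3 / 2 : ℝ)]

private lemma crossL2 (x y : ℝ) (hx : 0 < x) (hxy : x < y) (hy6 : y ≤ 6) :
    rI14 2 y * x < rI14 2 x * y := by
  have hy : 0 < y := hx.trans hxy
  have h2 : (0:ℝ) ≤ (y - x) * x * y * (12 - x - y) :=
    mul_nonneg (mul_nonneg (mul_nonneg (sub_pos.2 hxy).le hx.le) hy.le) (by linarith)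
  unfold rI14
  push_cast
  nlinarith [sub_pos.2 hxy, h2]

private lemma crossR2 (x y : ℝ) (hx : 12 / 5 ≤ x) (hxy : x < y) :
    rI14 2 x * y ^ 3 < rI14 2 y * x ^ 3 := by
  have hy : (12:ℝ) / 5 ≤ y := hx.trans hxy.le
  unfold rI14
  push_cast
  nlinarith [sub_pos.2 hxy,
    mul_pos (sub_pos.2 hxy) (mul_pos (by linarith : (0:ℝ) < x) (by linarith : (0:ℝ) < y)),
    sq_nonneg (x * y),
    mul_nonneg (by linarith : (0:ℝ) ≤ x - 12 / 5) (by linarith : (0:ℝ) ≤ y - 12 / 5),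
    sq_nonneg (x - y),
    mul_nonneg (mul_nonneg (by linarith : (0:ℝ) ≤ x - 12 / 5)
      (by linarith : (0:ℝ) ≤ y - 12 / 5)) (sub_pos.2 hxy).le]

/-- Sign of `q_m` for type `I_{1,4}`: positivity for `m ≥ 8`; for `m = 1, 2`
exactly two positive roots `μ_{m,1} < μ_{m,2}` (with `μ_{1,1} = √(3/2)`,
`μ_{1,2} = 4`) characterizing the sign; for `3 ≤ m ≤ 7` exactly one positive
root `μ_m` characterizing the sign. -/
theorem qI14_sign :
    (∀ m : ℕ, 8 ≤ m → ∀ μ : ℝ, 0 < μ → 0 < qI14 m μ) ∧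
    (∀ m : ℕ, 1 ≤ m → m ≤ 2 → ∃ ρ₁ ρ₂ : ℝ, 0 < ρ₁ ∧ ρ₁ < ρ₂ ∧
      qI14 m ρ₁ = 0 ∧ qI14 m ρ₂ = 0 ∧
      (∀ x : ℝ, 0 < x → qI14 m x = 0 → x = ρ₁ ∨ x = ρ₂) ∧
      (∀ μ : ℝ, 0 < μ → (0 ≤ qI14 m μ ↔ μ ≤ ρ₁ ∨ ρ₂ ≤ μ))) ∧
    qI14 1 (Real.sqrt (3 / 2)) = 0 ∧ qI14 1 4 = 0 ∧ Real.sqrt (3 / 2) < 4 ∧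
    (∀ m : ℕ, 3 ≤ m → m ≤ 7 → ∃! r : ℝ, 0 < r ∧ qI14 m r = 0) ∧
    (∀ m : ℕ, 3 ≤ m → m ≤ 7 → ∀ r : ℝ, 0 < r → qI14 m r = 0 →
      ∀ μ : ℝ, 0 < μ → (0 ≤ qI14 m μ ↔ μ ≤ r)) := by
  refine ⟨?_, ?_, ?_, ?_, sqrt_lt_four, ?_, ?_⟩
  · -- m ≥ 8
    intro m hm μ hμ
    have hm' : (8:ℝ) ≤ (m:ℝ) := by exact_mod_cast hm
    have h1 : (0:ℝ) ≤ ((m:ℝ) - 8) * ((m:ℝ) ^ 2 - 2 * (m:ℝ) - 1) :=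
      mul_nonneg (by linarith) (by nlinarith)
    have hr : 0 < rI14 m μ := by
      unfold rI14
      nlinarith [pow_pos hμ 2, pow_pos hμ 3, mul_pos hμ hμ,
        mul_nonneg h1 (pow_pos hμ 3).le,
        mul_pos (by nlinarith : (0:ℝ) < (m:ℝ) * ((m:ℝ) - 5)) (pow_pos hμ 2),
        mul_pos (by linarith : (0:ℝ) < (19 * (m:ℝ) - 25) / 4) hμ]
    exact mul_pos (factor_pos m hμ) hr
  · -- m = 1, 2
    intro m h1 h2
    interval_cases m
    · -- m = 1
      have hs : Real.sqrt (3 / 2) ^ 2 = 3 / 2 := Real.sq_sqrt (by norm_num)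
      have hs0 : 0 < Real.sqrt (3 / 2) := Real.sqrt_pos.2 (by norm_num)
      refine ⟨Real.sqrt (3 / 2), 4, hs0, sqrt_lt_four, ?_, ?_, ?_, ?_⟩
      · unfold qI14; rw [r1_sqrt, mul_zero]
      · unfold qI14; rw [r1_four, mul_zero]
      · intro x hx hqx
        have hrx : rI14 1 x = 0 := (q_eq_zero_iff 1 hx).1 hqx
        unfold rI14 at hrx; push_cast at hrx
        have hfac : (x - 4) * (x ^ 2 - 3 / 2) = 0 := by linear_combination hrx
        rcases mul_eq_zero.1 hfac with h | h
        · right; linarith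
        · left
          have hx2 : x ^ 2 = 3 / 2 := by linarith
          rw [← Real.sqrt_sq hx.le, hx2]
      · intro μ hμ
        rw [q_nonneg_iff 1 hμ]
        constructor
        · intro h
          by_contra hc
          push_neg at hc
          obtain ⟨hc1, hc2⟩ := hc
          unfold rI14 at h; push_cast at h
          nlinarith [mul_pos (by linarith : (0:ℝ) < 4 - μ)
            (by nlinarith : (0:ℝ) < μ ^ 2 - 3 / 2)]
        · rintro (h | h)
          · unfold rI14; push_cast
            nlinarith [mul_nonneg (by linarith [sqrt_lt_four] : (0:ℝ) ≤ 4 - μ)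
              (by nlinarith : (0:ℝ) ≤ 3 / 2 - μ ^ 2)]
          · unfold rI14; push_cast
            nlinarith [mul_nonneg (by linarith : (0:ℝ) ≤ μ - 4)
              (by nlinarith : (0:ℝ) ≤ μ ^ 2 - 3 / 2)]
    · -- m = 2
      obtain ⟨ρ₁, ⟨h11, h12⟩, hr1⟩ : ∃ ρ ∈ Set.Icc (1:ℝ) 2, rI14 2 ρ = 0 := by
        have h := intermediate_value_Icc' (by norm_num : (1:ℝ) ≤ 2)
          (rI14_cont 2).continuousOn
        have h0 : (0:ℝ) ∈ Set.Icc (rI14 2 2) (rI14 2 1) := by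
          constructor <;> · unfold rI14; push_cast; norm_num
        obtain ⟨ρ, hρ, hρ0⟩ := h h0
        exact ⟨ρ, hρ, hρ0⟩
      obtain ⟨ρ₂, ⟨h21, h22⟩, hr2⟩ : ∃ ρ ∈ Set.Icc (11:ℝ) 12, rI14 2 ρ = 0 := by
        have h := intermediate_value_Icc (by norm_num : (11:ℝ) ≤ 12)
          (rI14_cont 2).continuousOn
        have h0 : (0:ℝ) ∈ Set.Icc (rI14 2 11) (rI14 2 12) := by
          constructor <;> · unfold rI14; push_cast; norm_num
        obtain ⟨ρ, hρ, hρ0⟩ := h h0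
        exact ⟨ρ, hρ, hρ0⟩
      refine ⟨ρ₁, ρ₂, by linarith, by linarith, ?_, ?_, ?_, ?_⟩
      · unfold qI14; rw [hr1, mul_zero]
      · unfold qI14; rw [hr2, mul_zero]
      · intro x hx hqx
        have hrx : rI14 2 x = 0 := (q_eq_zero_iff 2 hx).1 hqx
        by_cases hx6 : x ≤ 6
        · left
          rcases lt_trichotomy x ρ₁ with h' | h' | h'
          · have := crossL2 x ρ₁ hx h' (by linarith)
            rw [hrx, hr1] at this
            simp at this
          · exact h'
          · have := crossL2 ρ₁ x (by linarith) h' hx6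
            rw [hrx, hr1] at this
            simp at this
        · right
          push_neg at hx6
          rcases lt_trichotomy x ρ₂ with h' | h' | h'
          · have := crossR2 x ρ₂ (by linarith) h'
            rw [hrx, hr2] at this
            simp at this
          · exact h'
          · have := crossR2 ρ₂ x (by linarith) h'
            rw [hrx, hr2] at this
            simp at this
      · intro μ hμ
        rw [q_nonneg_iff 2 hμ]
        constructor
        · intro h
          by_contra hc
          push_neg at hc
          obtain ⟨hc1, hc2⟩ := hc
          by_cases h6 : μ ≤ 6
          · have := crossL2 ρ₁ μ (by linarith) hc1 h6
            rw [hr1, zero_mul] at this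
            have h2 := mul_nonneg h (by linarith : (0:ℝ) ≤ ρ₁)
            linarith
          · push_neg at h6
            have := crossR2 μ ρ₂ (by linarith) hc2
            rw [hr2, zero_mul] at this
            have h2 := mul_nonneg h (by positivity : (0:ℝ) ≤ ρ₂ ^ 3)
            linarith
        · rintro (h | h)
          · rcases eq_or_lt_of_le h with heq | hlt
            · rw [heq]; exact hr1.ge
            · have := crossL2 μ ρ₁ hμ hlt (by linarith)
              rw [hr1, zero_mul] at this
              rcases mul_pos_iff.1 this with ⟨h2, _⟩ | ⟨_, h2⟩
              · exact h2.le
              · linarith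
          · rcases eq_or_lt_of_le h with heq | hlt
            · rw [← heq]; exact hr2.ge
            · have := crossR2 ρ₂ μ (by linarith) hlt
              rw [hr2, zero_mul] at this
              rcases mul_pos_iff.1 this with ⟨h2, _⟩ | ⟨_, h2⟩
              · exact h2.le
              · nlinarith [pow_pos (by linarith : (0:ℝ) < ρ₂) 3]
  · unfold qI14; rw [r1_sqrt, mul_zero]
  · unfold qI14; rw [r1_four, mul_zero]
  · -- 3 ≤ m ≤ 7 : ∃!
    intro m h3 h7
    obtain ⟨ρ, ⟨hρ1, _⟩, hρ0⟩ := root37 m h3 h7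
    obtain ⟨k, hk⟩ := cross37 m h3 h7
    have hρpos : (0:ℝ) < ρ := by linarith
    refine ⟨ρ, ⟨hρpos, by unfold qI14; rw [hρ0, mul_zero]⟩, ?_⟩
    rintro x ⟨hx, hqx⟩
    exact cross_unique hk hx hρpos ((q_eq_zero_iff m hx).1 hqx) hρ0
  · -- 3 ≤ m ≤ 7 : sign
    intro m h3 h7 r hr hqr μ hμ
    obtain ⟨k, hk⟩ := cross37 m h3 h7
    rw [q_nonneg_iff m hμ]
    exact cross_sign hk hr ((q_eq_zero_iff m hr).1 hqr) hμ
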